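/- arXiv:2405.07987 — 3 statements merged into one kernel-verified Lean document; each statement's English description precedes it below -/
import Mathlib

section
/- Let N ≥ 1 and let K be a symmetric N×N real matrix. Suppose there exist real numbers L and δ ≥ 0 with L + δ ≤ 0 such that every off-diagonal entry satisfies L ≤ K i j ≤ L + δ for all i ≠ j, and every diagonal entry satisfies K i i ≥ L + N·δ. Then for the specific choice C := - min over i of (1/N) · (∑_{j} K i j), the matrix whose (i,j) entry is K i j + C is positive semidefinite. -/
lemma aux_quad_id {N : ℕ} (M : Matrix (Fin N) (Fin N) ℝ)
    (hs : ∀ i j, M i j = M j i) (x : Fin N → ℝ) :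
    2 * (∑ i, ∑ j, x i * (M i j * x j))
      = 2 * (∑ i, (∑ j, M i j) * x i ^ 2)
        + ∑ i, ∑ j, (- M i j) * (x i - x j) ^ 2 := by
  have swap : ∑ i, ∑ j, M i j * x j ^ 2 = ∑ i, ∑ j, M i j * x i ^ 2 := by
    rw [Finset.sum_comm]
    exact Finset.sum_congr rfl fun j _ => Finset.sum_congr rfl fun i _ => by rw [hs]
  have hA : ∑ i, (∑ j, M i j) * x i ^ 2 = ∑ i, ∑ j, M i j * x i ^ 2 := by
    simp [Finset.sum_mul]
  have hB : ∑ i, ∑ j, (- M i j) * (x i - x j) ^ 2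
      = ∑ i, ((∑ j, (-(M i j * x i ^ 2))) + ((∑ j, (-(M i j * x j ^ 2)))
          + ∑ j, 2 * (x i * (M i j * x j)))) := by
    refine Finset.sum_congr rfl fun i _ => ?_
    rw [← Finset.sum_add_distrib, ← Finset.sum_add_distrib]
    exact Finset.sum_congr rfl fun j _ => by ring
  rw [hB]
  simp only [Finset.sum_add_distrib, Finset.sum_neg_distrib, ← Finset.mul_sum]
  rw [hA]
  rw [show (∑ i, ∑ j, M i j * x j ^ 2) = ∑ i, ∑ j, M i j * x i ^ 2 from swap]
  ring

lemma aux_psd {N : ℕ} (M : Matrix (Fin N) (Fin N) ℝ)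
    (hs : ∀ i j, M i j = M j i)
    (hrow : ∀ i, 0 ≤ ∑ j, M i j)
    (hoff : ∀ i j, i ≠ j → M i j ≤ 0) :
    M.PosSemidef := by
  rw [Matrix.posSemidef_iff_dotProduct_mulVec]
  constructor
  · ext i j
    simp [Matrix.conjTranspose_apply, hs i j]
  · intro x
    simp only [dotProduct, Matrix.mulVec, dotProduct, star_trivial,
      Finset.mul_sum]
    have key := aux_quad_id M hs x
    have h1 : 0 ≤ ∑ i, (∑ j, M i j) * x i ^ 2 :=
      Finset.sum_nonneg fun i _ => mul_nonneg (hrow i) (sq_nonneg _)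
    have h2 : 0 ≤ ∑ i, ∑ j, (- M i j) * (x i - x j) ^ 2 := by
      refine Finset.sum_nonneg fun i _ => Finset.sum_nonneg fun j _ => ?_
      rcases eq_or_ne i j with rfl | hne
      · simp
      · exact mul_nonneg (neg_nonneg.2 (hoff i j hne)) (sq_nonneg _)
    nlinarith [key]

/-- Under the same hypotheses as Statement 0, the specific choice
`C := - min_i (1/N) · ∑_j K i j` makes the matrix `K i j + C` positive semidefinite. -/
theorem stmt1 (N : ℕ) (hN : 1 ≤ N) (K : Matrix (Fin N) (Fin N) ℝ)
    (hsymm : ∀ i j, K i j = K j i)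
    (L δ : ℝ) (hδ : 0 ≤ δ) (hLδ : L + δ ≤ 0)
    (hoff : ∀ i j, i ≠ j → L ≤ K i j ∧ K i j ≤ L + δ)
    (hdiag : ∀ i, K i i ≥ L + (N : ℝ) * δ) :
    Matrix.PosSemidef (Matrix.of fun i j =>
      K i j + (- Finset.univ.inf'
        (Finset.univ_nonempty_iff.mpr (Fin.pos_iff_nonempty.mp hN))
        (fun i => (1 / (N : ℝ)) * ∑ j, K i j))) := by
  have hNpos : (0:ℝ) < N := by exact_mod_cast hN
  set ne : Finset.univ.Nonempty := (Finset.univ_nonempty_iff.mpr (Fin.pos_iff_nonempty.mp hN))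
  set m := Finset.univ.inf' ne (fun i => (1 / (N : ℝ)) * ∑ j, K i j) with hm
  -- row sums are at least N * (L + δ)
  have hrowlb : ∀ i, (N : ℝ) * (L + δ) ≤ ∑ j, K i j := by
    intro i
    have hsplit : ∑ j, K i j = K i i + ∑ j ∈ Finset.univ.erase i, K i j := by
      rw [← Finset.sum_erase_add Finset.univ _ (Finset.mem_univ i)]; ring
    have hcard : (Finset.univ.erase i).card = N - 1 := by
      simp [Finset.card_erase_of_mem]
    have hoffsum : ((N : ℝ) - 1) * L ≤ ∑ j ∈ Finset.univ.erase i, K i j := by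
      have := Finset.card_nsmul_le_sum (Finset.univ.erase i) (fun j => K i j) L
        (fun j hj => (hoff i j (Ne.symm (Finset.ne_of_mem_erase hj))).1)
      rw [hcard, nsmul_eq_mul] at this
      have hcast : ((N - 1 : ℕ) : ℝ) = (N : ℝ) - 1 := by
        have : (1:ℕ) ≤ N := hN
        push_cast [Nat.cast_sub this]
        ring
      rw [hcast] at this
      exact this
    have := hdiag i
    rw [hsplit]
    nlinarith
  -- hence m ≥ L + δ
  have hmge : L + δ ≤ m := by
    rw [hm]
    apply Finset.le_inf'
    intro i _
    rw [one_div, ← div_eq_inv_mul, le_div_iff₀ hNpos]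
    nlinarith [hrowlb i]
  -- m ≤ each row average
  have hmle : ∀ i, m ≤ (1 / (N : ℝ)) * ∑ j, K i j := fun i =>
    Finset.inf'_le _ (Finset.mem_univ i)
  apply aux_psd
  · intro i j; simp [hsymm i j]
  · intro i
    have := hmle i
    have h : (N:ℝ) * m ≤ ∑ j, K i j := by
      rw [one_div, ← div_eq_inv_mul, le_div_iff₀ hNpos] at this
      linarith [this]
    simp only [Matrix.of_apply, Finset.sum_add_distrib, Finset.sum_const,
      Finset.card_univ, Fintype.card_fin, nsmul_eq_mul]
    linarith
  · intro i j hne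
    have h1 := (hoff i j hne).2
    have : K i j ≤ m := le_trans h1 hmge
    simp only [Matrix.of_apply]
    linarith
end

section
/- Let X be a finite nonempty type, let Pco : X × X → ℝ be a symmetric probability mass function (Pco(a,b) = Pco(b,a) ≥ 0, summing to 1) with all values strictly positive, and let P(a) = ∑_{b} Pco(a,b) be its marginal. Fix p_pos ∈ (0,1). Define the binary NCE loss of a function g : X × X → ℝ as L(g) = p_pos · ∑_{(a,b)} Pco(a,b)·(−log σ(g(a,b))) + (1 − p_pos) · ∑_{(a,b)} P(a)·P(b)·(−log σ(−g(a,b))), where σ(t) = 1/(1 + exp(−t)). Then the function g*(a,b) = log( Pco(a,b) / (P(a)·P(b)) ) + log( p_pos / (1 − p_pos) ) satisfies L(g*) ≤ L(g) for every g : X × X → ℝ, with equality if and only if g = g*. -/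
/-- The logistic sigmoid `σ(t) = 1/(1 + exp (−t))`. -/
noncomputable def sigmoid (t : ℝ) : ℝ := 1 / (1 + Real.exp (-t))

lemma sigmoid_pos (t : ℝ) : 0 < sigmoid t := by
  unfold sigmoid; positivity

lemma sigmoid_lt_one (t : ℝ) : sigmoid t < 1 := by
  unfold sigmoid
  rw [div_lt_one (by positivity)]
  linarith [Real.exp_pos (-t)]

lemma sigmoid_neg (t : ℝ) : sigmoid (-t) = 1 - sigmoid t := by
  unfold sigmoid
  rw [neg_neg, Real.exp_neg]
  have h1 : (0:ℝ) < 1 + Real.exp t := by positivity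
  have h2 : (0:ℝ) < 1 + (Real.exp t)⁻¹ := by positivity
  field_simp
  ring

lemma sigmoid_injective : Function.Injective sigmoid := by
  intro a b h
  unfold sigmoid at h
  rw [div_eq_div_iff (by positivity) (by positivity)] at h
  have : Real.exp (-b) = Real.exp (-a) := by linarith
  have := Real.exp_injective this
  linarith

lemma sigmoid_log_div {α β : ℝ} (hα : 0 < α) (hβ : 0 < β) :
    sigmoid (Real.log (α / β)) = α / (α + β) := by
  unfold sigmoid
  rw [← Real.log_inv, Real.exp_log (by positivity)]
  rw [inv_div]
  field_simp

/-- Core inequality on `s ∈ (0,1)`: cross-entropy ≥ entropy, strict off the optimum. -/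
lemma core_lt {α β s : ℝ} (hα : 0 < α) (hβ : 0 < β) (hs0 : 0 < s) (hs1 : s < 1)
    (hne : s ≠ α / (α + β)) :
    α * (-Real.log (α / (α + β))) + β * (-Real.log (β / (α + β)))
      < α * (-Real.log s) + β * (-Real.log (1 - s)) := by
  have hab : (0:ℝ) < α + β := by linarith
  have h1s : (0:ℝ) < 1 - s := by linarith
  have hu : (0:ℝ) < s * (α + β) / α := by positivity
  have hv : (0:ℝ) < (1 - s) * (α + β) / β := by positivity
  have hune : s * (α + β) / α ≠ 1 := by
    intro h
    apply hne
    field_simp at h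
    field_simp
    linarith
  have h1 : Real.log (s * (α + β) / α) < s * (α + β) / α - 1 :=
    Real.log_lt_sub_one_of_pos hu hune
  have h2 : Real.log ((1 - s) * (α + β) / β) ≤ (1 - s) * (α + β) / β - 1 :=
    Real.log_le_sub_one_of_pos hv
  have e1 : Real.log (s * (α + β) / α) = Real.log s + Real.log (α + β) - Real.log α := by
    rw [Real.log_div (by positivity) hα.ne', Real.log_mul hs0.ne' hab.ne']
  have e2 : Real.log ((1 - s) * (α + β) / β)
      = Real.log (1 - s) + Real.log (α + β) - Real.log β := by
    rw [Real.log_div (by positivity) hβ.ne', Real.log_mul h1s.ne' hab.ne']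
  have e3 : Real.log (α / (α + β)) = Real.log α - Real.log (α + β) :=
    Real.log_div hα.ne' hab.ne'
  have e4 : Real.log (β / (α + β)) = Real.log β - Real.log (α + β) :=
    Real.log_div hβ.ne' hab.ne'
  rw [e1] at h1
  rw [e2] at h2
  have hd1 : α * (s * (α + β) / α - 1) = s * (α + β) - α := by
    field_simp
  have hd2 : β * ((1 - s) * (α + β) / β - 1) = (1 - s) * (α + β) - β := by
    field_simp
  have H1 : α * (Real.log s + Real.log (α + β) - Real.log α) < s * (α + β) - α := by
    have t := mul_lt_mul_of_pos_left h1 hα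
    rwa [hd1] at t
  have H2 : β * (Real.log (1 - s) + Real.log (α + β) - Real.log β) ≤ (1 - s) * (α + β) - β := by
    have t := mul_le_mul_of_nonneg_left h2 hβ.le
    rwa [hd2] at t
  rw [e3, e4]
  nlinarith [H1, H2]

/-- Pointwise result: `F(t) = α·(−log σ t) + β·(−log σ(−t))` is uniquely minimized
at `t* = log (α/β)`. -/
lemma ptwise {α β : ℝ} (hα : 0 < α) (hβ : 0 < β) (t : ℝ) :
    (α * (-Real.log (sigmoid (Real.log (α / β))))
        + β * (-Real.log (sigmoid (-(Real.log (α / β)))))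
      ≤ α * (-Real.log (sigmoid t)) + β * (-Real.log (sigmoid (-t))))
    ∧ (α * (-Real.log (sigmoid t)) + β * (-Real.log (sigmoid (-t)))
        = α * (-Real.log (sigmoid (Real.log (α / β))))
          + β * (-Real.log (sigmoid (-(Real.log (α / β)))))
      ↔ t = Real.log (α / β)) := by
  have hab : (0:ℝ) < α + β := by linarith
  have hsl : sigmoid (Real.log (α / β)) = α / (α + β) := sigmoid_log_div hα hβ
  have hsl' : sigmoid (-(Real.log (α / β))) = β / (α + β) := by
    rw [sigmoid_neg, hsl]
    field_simp
    ring
  have hkey : ∀ u : ℝ, u ≠ Real.log (α / β) →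
      α * (-Real.log (sigmoid (Real.log (α / β))))
          + β * (-Real.log (sigmoid (-(Real.log (α / β)))))
        < α * (-Real.log (sigmoid u)) + β * (-Real.log (sigmoid (-u))) := by
    intro u hu
    rw [hsl, hsl', sigmoid_neg]
    have hne : sigmoid u ≠ α / (α + β) := by
      intro h
      apply hu
      apply sigmoid_injective
      rw [h, hsl]
    exact core_lt hα hβ (sigmoid_pos u) (sigmoid_lt_one u) hne
  constructor
  · rcases eq_or_ne t (Real.log (α / β)) with h | h
    · rw [h]
    · exact (hkey t h).le
  · constructor
    · intro h
      by_contra hne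
      exact absurd h (ne_of_gt (hkey t hne))
    · intro h; rw [h]

/-- The binary NCE loss is uniquely globally minimized by
`g*(a,b) = PMI(a,b) + log (p_pos / (1 − p_pos))`. -/
theorem stmt7 {X : Type*} [Fintype X] [Nonempty X]
    (Pco : X × X → ℝ)
    (hsymm : ∀ a b : X, Pco (a, b) = Pco (b, a))
    (hpos : ∀ p : X × X, 0 < Pco p)
    (hsum : ∑ p : X × X, Pco p = 1)
    (P : X → ℝ) (hP : ∀ a : X, P a = ∑ b : X, Pco (a, b))
    (ppos : ℝ) (hp0 : 0 < ppos) (hp1 : ppos < 1)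
    (L : ((X × X) → ℝ) → ℝ)
    (hL : ∀ g : (X × X) → ℝ,
      L g = ppos * ∑ p : X × X, Pco p * (-Real.log (sigmoid (g p)))
        + (1 - ppos) * ∑ p : X × X, P p.1 * P p.2 * (-Real.log (sigmoid (-(g p)))))
    (gstar : (X × X) → ℝ)
    (hgstar : ∀ p : X × X,
      gstar p = Real.log (Pco p / (P p.1 * P p.2)) + Real.log (ppos / (1 - ppos))) :
    (∀ g : (X × X) → ℝ, L gstar ≤ L g) ∧
      (∀ g : (X × X) → ℝ, L g = L gstar ↔ g = gstar) := by
  have hp1' : (0:ℝ) < 1 - ppos := by linarith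
  have hPpos : ∀ a : X, 0 < P a := by
    intro a
    rw [hP a]
    exact Finset.sum_pos (fun b _ => hpos (a, b)) Finset.univ_nonempty
  -- abbreviations
  set F : ((X × X) → ℝ) → (X × X) → ℝ := fun g p =>
    (ppos * Pco p) * (-Real.log (sigmoid (g p)))
      + ((1 - ppos) * (P p.1 * P p.2)) * (-Real.log (sigmoid (-(g p)))) with hF
  have hLsum : ∀ g : (X × X) → ℝ, L g = ∑ p : X × X, F g p := by
    intro g
    rw [hL g, Finset.mul_sum, Finset.mul_sum, ← Finset.sum_add_distrib]
    apply Finset.sum_congr rfl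
    intro p _
    simp only [hF]
    ring
  -- gstar p = log (α/β)
  have hgstar' : ∀ p : X × X,
      gstar p = Real.log ((ppos * Pco p) / ((1 - ppos) * (P p.1 * P p.2))) := by
    intro p
    have hq1 : (0:ℝ) < Pco p / (P p.1 * P p.2) :=
      div_pos (hpos p) (mul_pos (hPpos p.1) (hPpos p.2))
    have hq2 : (0:ℝ) < ppos / (1 - ppos) := div_pos hp0 hp1'
    rw [hgstar p, ← Real.log_mul hq1.ne' hq2.ne']
    congr 1
    have h1 := (hPpos p.1).ne'
    have h2 := (hPpos p.2).ne'
    field_simp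
  -- pointwise facts
  have hpt : ∀ (g : (X × X) → ℝ) (p : X × X),
      F gstar p ≤ F g p ∧ (F g p = F gstar p ↔ g p = gstar p) := by
    intro g p
    have hα : 0 < ppos * Pco p := mul_pos hp0 (hpos p)
    have hβ : 0 < (1 - ppos) * (P p.1 * P p.2) :=
      mul_pos hp1' (mul_pos (hPpos p.1) (hPpos p.2))
    have h := ptwise hα hβ (g p)
    have hg' : gstar p = Real.log ((ppos * Pco p) / ((1 - ppos) * (P p.1 * P p.2))) :=
      hgstar' p
    constructor
    · simpa only [hF, hg'] using h.1
    · simpa only [hF, hg'] using h.2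
  constructor
  · intro g
    rw [hLsum g, hLsum gstar]
    exact Finset.sum_le_sum (fun p _ => (hpt g p).1)
  · intro g
    rw [hLsum g, hLsum gstar]
    rw [eq_comm, Finset.sum_eq_sum_iff_of_le (fun p _ => (hpt g p).1)]
    constructor
    · intro h
      funext p
      exact ((hpt g p).2).1 ((h p (Finset.mem_univ p)).symm)
    · intro h
      intro p _
      rw [h]
end

section
/- Let X be a finite nonempty type, let Pco : X × X → ℝ be a symmetric probability mass function with strictly positive values, and let P(a) = ∑_{b} Pco(a,b) be its marginal. Fix K ≥ 1 and define the InfoNCE loss (with temperature 1) of g : X × X → ℝ as L(g) = ∑_{(x,x₊)} Pco(x,x₊) · ∑_{(x₋¹,…,x₋ᴷ)} ( ∏_{i=1}^{K} P(x₋ⁱ) ) · ( −log( exp(g(x,x₊)) / ( exp(g(x,x₊)) + ∑_{i=1}^{K} exp(g(x,x₋ⁱ)) ) ) ). Then for any c : X → ℝ, the function g*(x,y) = log( Pco(x,y) / (P(x)·P(y)) ) + c(x) satisfies L(g*) ≤ L(g) for every g : X × X → ℝ. -/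
open Finset

/-- Gibbs' inequality: cross-entropy is minimized by the normalized weights. -/
lemma gibbs_aux {n : ℕ} (w q : Fin n → ℝ) (hw : ∀ j, 0 < w j)
    (hq : ∀ j, 0 < q j) (hq1 : ∑ j, q j = 1) :
    ∑ j, w j * (-Real.log (w j / ∑ k, w k)) ≤ ∑ j, w j * (-Real.log (q j)) := by
  rcases Nat.eq_zero_or_pos n with h | h
  · subst h
    rw [Fin.sum_univ_zero] at hq1
    norm_num at hq1
  have hW : 0 < ∑ k, w k :=
    Finset.sum_pos (fun j _ => hw j) ⟨⟨0, h⟩, Finset.mem_univ _⟩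
  have hterm : ∀ j : Fin n,
      w j - q j * ∑ k, w k ≤
        w j * (-Real.log (q j)) - w j * (-Real.log (w j / ∑ k, w k)) := by
    intro j
    have hx : 0 < q j * (∑ k, w k) / w j := div_pos (mul_pos (hq j) hW) (hw j)
    have hlog := Real.log_le_sub_one_of_pos hx
    have h1 : w j * Real.log (q j * (∑ k, w k) / w j)
        ≤ w j * (q j * (∑ k, w k) / w j - 1) :=
      mul_le_mul_of_nonneg_left hlog (hw j).le
    have h2 : w j * (q j * (∑ k, w k) / w j - 1) = q j * (∑ k, w k) - w j := by
      field_simp [(hw j).ne']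
    have hlogeq : Real.log (q j * (∑ k, w k) / w j)
        = Real.log (q j) - Real.log (w j / ∑ k, w k) := by
      rw [Real.log_div (mul_pos (hq j) hW).ne' (ne_of_gt (hw j)),
          Real.log_mul (ne_of_gt (hq j)) (ne_of_gt hW),
          Real.log_div (ne_of_gt (hw j)) (ne_of_gt hW)]
      ring
    rw [hlogeq] at h1
    nlinarith [h1, h2]
  calc ∑ j, w j * (-Real.log (w j / ∑ k, w k))
      = ∑ j, (w j * (-Real.log (q j)) - (w j * (-Real.log (q j))
          - w j * (-Real.log (w j / ∑ k, w k)))) := by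
        refine Finset.sum_congr rfl fun j _ => ?_; ring
    _ ≤ ∑ j, (w j * (-Real.log (q j)) - (w j - q j * ∑ k, w k)) :=
        Finset.sum_le_sum fun j _ => by linarith [hterm j]
    _ = ∑ j, w j * (-Real.log (q j)) := by
        rw [Finset.sum_sub_distrib, Finset.sum_sub_distrib, ← Finset.sum_mul, hq1]
        ring

/-- Auxiliary summand. -/
noncomputable def stmt9T {X : Type*} [Fintype X] (Pco : X × X → ℝ) (P : X → ℝ) (K : ℕ)
    (g : (X × X) → ℝ) (x : X) (v : Fin (K + 1) → X) (j : Fin (K + 1)) : ℝ :=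
  (Pco (x, v j) / P (v j) * ∏ i, P (v i)) *
    (-Real.log (Real.exp (g (x, v j)) / ∑ k, Real.exp (g (x, v k))))

lemma stmt9_structA {X : Type*} [Fintype X] (Pco : X × X → ℝ) (P : X → ℝ)
    (hPpos : ∀ a, 0 < P a) (K : ℕ) (g : (X × X) → ℝ) :
    ∑ p : X × X, Pco p * ∑ xneg : Fin K → X, (∏ i : Fin K, P (xneg i)) *
      (-Real.log (Real.exp (g p) /
        (Real.exp (g p) + ∑ i : Fin K, Real.exp (g (p.1, xneg i)))))
    = ∑ x : X, ∑ v : Fin (K + 1) → X, stmt9T Pco P K g x v 0 := by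
  rw [Fintype.sum_prod_type]
  refine Finset.sum_congr rfl fun x _ => ?_
  have hre : ∑ v : Fin (K + 1) → X, stmt9T Pco P K g x v 0
      = ∑ p : X × (Fin K → X), stmt9T Pco P K g x (Fin.cons p.1 p.2) 0 :=
    (Fintype.sum_equiv (Fin.consEquiv fun _ => X) _ _ (fun p => rfl)).symm
  rw [hre, Fintype.sum_prod_type]
  refine Finset.sum_congr rfl fun y _ => ?_
  rw [Finset.mul_sum]
  refine Finset.sum_congr rfl fun u _ => ?_
  have hPy := (hPpos y).ne'
  simp only [stmt9T, Fin.prod_univ_succ, Fin.sum_univ_succ, Fin.cons_zero, Fin.cons_succ]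
  field_simp

lemma stmt9_swap {X : Type*} [Fintype X] (Pco : X × X → ℝ) (P : X → ℝ) (K : ℕ)
    (g : (X × X) → ℝ) (x : X) (j : Fin (K + 1)) :
    ∑ v : Fin (K + 1) → X, stmt9T Pco P K g x v j
      = ∑ v : Fin (K + 1) → X, stmt9T Pco P K g x v 0 := by
  refine Fintype.sum_equiv ((Equiv.swap 0 j).arrowCongr (Equiv.refl X)) _ _ fun v => ?_
  have hp : ∏ i, P (v (Equiv.swap 0 j i)) = ∏ i, P (v i) :=
    Equiv.prod_comp (Equiv.swap 0 j) (fun i => P (v i))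
  have hs : ∑ k, Real.exp (g (x, v (Equiv.swap 0 j k))) = ∑ k, Real.exp (g (x, v k)) :=
    Equiv.sum_comp (Equiv.swap 0 j) (fun k => Real.exp (g (x, v k)))
  simp only [stmt9T, Equiv.arrowCongr_apply, Equiv.coe_refl, Function.comp_apply,
    Equiv.symm_swap, Equiv.swap_apply_left, id_eq, hp, hs]

/-- The InfoNCE loss (temperature 1, `K ≥ 1` negatives) is globally
minimized by `g*(x,y) = PMI(x,y) + c(x)`, for any offset function `c`. -/
theorem stmt9 {X : Type*} [Fintype X] [Nonempty X]
    (Pco : X × X → ℝ)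
    (hsymm : ∀ a b : X, Pco (a, b) = Pco (b, a))
    (hpos : ∀ p : X × X, 0 < Pco p)
    (hsum : ∑ p : X × X, Pco p = 1)
    (P : X → ℝ) (hP : ∀ a : X, P a = ∑ b : X, Pco (a, b))
    (K : ℕ) (hK : 1 ≤ K)
    (L : ((X × X) → ℝ) → ℝ)
    (hL : ∀ g : (X × X) → ℝ,
      L g = ∑ p : X × X, Pco p *
        ∑ xneg : Fin K → X, (∏ i : Fin K, P (xneg i)) *
          (-Real.log (Real.exp (g p) /
            (Real.exp (g p) + ∑ i : Fin K, Real.exp (g (p.1, xneg i))))))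
    (c : X → ℝ)
    (gstar : (X × X) → ℝ)
    (hgstar : ∀ p : X × X,
      gstar p = Real.log (Pco p / (P p.1 * P p.2)) + c p.1) :
    ∀ g : (X × X) → ℝ, L gstar ≤ L g := by
  intro g
  have hPpos : ∀ a : X, 0 < P a := by
    intro a
    rw [hP a]
    exact Finset.sum_pos (fun b _ => hpos _) Finset.univ_nonempty
  have hLg : ∀ g' : (X × X) → ℝ,
      L g' = ∑ x : X, ∑ v : Fin (K + 1) → X, stmt9T Pco P K g' x v 0 := by
    intro g'
    rw [hL g']
    exact stmt9_structA Pco P hPpos K g'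
  have hmul : ∀ g' : (X × X) → ℝ,
      ((K : ℝ) + 1) * (∑ x : X, ∑ v : Fin (K + 1) → X, stmt9T Pco P K g' x v 0)
        = ∑ x : X, ∑ v : Fin (K + 1) → X, ∑ j : Fin (K + 1), stmt9T Pco P K g' x v j := by
    intro g'
    calc ((K : ℝ) + 1) * (∑ x : X, ∑ v : Fin (K + 1) → X, stmt9T Pco P K g' x v 0)
        = ∑ _j : Fin (K + 1), ∑ x : X, ∑ v : Fin (K + 1) → X, stmt9T Pco P K g' x v 0 := by
          rw [Finset.sum_const, Finset.card_univ, Fintype.card_fin]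
          push_cast
          ring
      _ = ∑ j : Fin (K + 1), ∑ x : X, ∑ v : Fin (K + 1) → X, stmt9T Pco P K g' x v j := by
          refine Finset.sum_congr rfl fun j _ => Finset.sum_congr rfl fun x _ => ?_
          exact (stmt9_swap Pco P K g' x j).symm
      _ = ∑ x : X, ∑ v : Fin (K + 1) → X, ∑ j : Fin (K + 1), stmt9T Pco P K g' x v j := by
          rw [Finset.sum_comm]
          exact Finset.sum_congr rfl fun x _ => Finset.sum_comm
  have key : ∀ (x : X) (v : Fin (K + 1) → X),
      ∑ j, stmt9T Pco P K gstar x v j ≤ ∑ j, stmt9T Pco P K g x v j := by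
    intro x v
    have hSpos : 0 < ∑ k, Real.exp (g (x, v k)) :=
      Finset.sum_pos (fun _ _ => Real.exp_pos _) Finset.univ_nonempty
    set w : Fin (K + 1) → ℝ := fun j => Pco (x, v j) / P (v j) * ∏ i, P (v i) with hw
    set q : Fin (K + 1) → ℝ :=
      fun j => Real.exp (g (x, v j)) / ∑ k, Real.exp (g (x, v k)) with hq
    have hwpos : ∀ j, 0 < w j := fun j =>
      mul_pos (div_pos (hpos _) (hPpos _)) (Finset.prod_pos fun i _ => hPpos _)
    have hqpos : ∀ j, 0 < q j := fun j => div_pos (Real.exp_pos _) hSpos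
    have hq1 : ∑ j, q j = 1 := by
      simp only [hq]
      rw [← Finset.sum_div, div_self hSpos.ne']
    have hgibbs := gibbs_aux w q hwpos hqpos hq1
    have hexp : ∀ y : X,
        Real.exp (gstar (x, y)) = Pco (x, y) / (P x * P y) * Real.exp (c x) := by
      intro y
      rw [hgstar, Real.exp_add, Real.exp_log (div_pos (hpos _) (mul_pos (hPpos x) (hPpos y)))]
    have hα : (0 : ℝ) < Real.exp (c x) / (P x * ∏ i, P (v i)) := by
      have := hPpos x
      have h2 : (0:ℝ) < ∏ i, P (v i) := Finset.prod_pos fun i _ => hPpos _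
      positivity
    have h1 : ∀ k : Fin (K + 1),
        Real.exp (gstar (x, v k)) = w k * (Real.exp (c x) / (P x * ∏ i, P (v i))) := by
      intro k
      rw [hexp, hw]
      have hx := (hPpos x).ne'
      have hk := (hPpos (v k)).ne'
      have h2 := (Finset.prod_pos (fun i (_ : i ∈ Finset.univ) => hPpos (v i))).ne'
      field_simp
    have hratio : ∀ j : Fin (K + 1),
        Real.exp (gstar (x, v j)) / ∑ k, Real.exp (gstar (x, v k)) = w j / ∑ k, w k := by
      intro j
      rw [h1 j, Finset.sum_congr rfl fun k _ => h1 k, ← Finset.sum_mul,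
        mul_div_mul_right _ _ hα.ne']
    calc ∑ j, stmt9T Pco P K gstar x v j
        = ∑ j, w j * (-Real.log (w j / ∑ k, w k)) := by
          refine Finset.sum_congr rfl fun j _ => ?_
          simp only [stmt9T, hw]
          rw [hratio j]
      _ ≤ ∑ j, w j * (-Real.log (q j)) := hgibbs
      _ = ∑ j, stmt9T Pco P K g x v j := by
          refine Finset.sum_congr rfl fun j _ => ?_
          simp only [stmt9T, hw, hq]
  have hfin : ((K : ℝ) + 1) * L gstar ≤ ((K : ℝ) + 1) * L g := by
    rw [hLg gstar, hLg g, hmul gstar, hmul g]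
    exact Finset.sum_le_sum fun x _ => Finset.sum_le_sum fun v _ => key x v
  have hKpos : (0 : ℝ) < (K : ℝ) + 1 := by positivity
  exact le_of_mul_le_mul_left hfin hKpos
end
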